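/- Let K be a convex subset of the Euclidean plane, let c ∈ K be a point maximizing f(x) = dist(x, Kᶜ) over K, and let y ∈ K. Then the function t ↦ f(c + t•(y - c)) is monotone nonincreasing on [0,1]. -/

import Mathlib

open Metric

lemma concave_step {E : Type*} [NormedAddCommGroup E] [NormedSpace ℝ E]
    {K : Set E} (hK : Convex ℝ K) {x z : E} (hx : x ∈ K) (hz : z ∈ K)
    {a b : ℝ} (ha : 0 ≤ a) (hb : 0 ≤ b) (hab : a + b = 1) :
    a * infDist x Kᶜ + b * infDist z Kᶜ ≤ infDist (a • x + b • z) Kᶜ := by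
  rcases Set.eq_empty_or_nonempty Kᶜ with hKc | hKc
  · simp [hKc]
  set r1 := infDist x Kᶜ with hr1
  set r2 := infDist z Kᶜ with hr2
  have h1 : 0 ≤ r1 := infDist_nonneg
  have h2 : 0 ≤ r2 := infDist_nonneg
  set R := a * r1 + b * r2 with hR
  have hR0 : 0 ≤ R := by positivity
  rcases eq_or_lt_of_le hR0 with hR0' | hRpos
  · rw [← hR0']; exact infDist_nonneg
  -- ball (a•x+b•z) R ⊆ K
  have hball : ball (a • x + b • z) R ⊆ K := by
    intro w hw
    rw [mem_ball, dist_eq_norm] at hw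
    set d := w - (a • x + b • z) with hd
    have key : ∀ (p : E) (r : ℝ), 0 ≤ r → p ∈ K → infDist p Kᶜ = r → p + (r / R) • d ∈ K := by
      intro p r hr hp hpr
      rcases eq_or_lt_of_le hr with h0 | h0
      · simp [← h0, hp]
      · have hb' : p + (r / R) • d ∈ ball p r := by
          rw [mem_ball, dist_eq_norm]
          have hnorm : ‖p + (r / R) • d - p‖ = r / R * ‖d‖ := by
            rw [add_sub_cancel_left, norm_smul, Real.norm_eq_abs,
              abs_of_nonneg (div_nonneg hr hR0)]
          rw [hnorm]
          calc r / R * ‖d‖ < r / R * R :=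
                mul_lt_mul_of_pos_left hw (div_pos h0 hRpos)
            _ = r := by field_simp
        exact ball_infDist_compl_subset (by rw [hpr]; exact hb')
    have hu : x + (r1 / R) • d ∈ K := key x r1 h1 hx rfl
    have hv : z + (r2 / R) • d ∈ K := key z r2 h2 hz rfl
    have h3 : a * (r1 / R) + b * (r2 / R) = 1 := by field_simp [hR]; exact hR.symm
    have hw' : a • (x + (r1 / R) • d) + b • (z + (r2 / R) • d) = w := by
      calc a • (x + (r1 / R) • d) + b • (z + (r2 / R) • d)
          = (a • x + b • z) + (a * (r1 / R) + b * (r2 / R)) • d := by module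
        _ = (a • x + b • z) + d := by rw [h3, one_smul]
        _ = w := by rw [hd]; abel
    rw [← hw']
    exact hK hu hv ha hb hab
  by_contra h
  push_neg at h
  obtain ⟨q, hq, hq'⟩ := (infDist_lt_iff hKc).mp h
  exact hq (hball (mem_ball'.mpr hq'))

theorem infDist_compl_antitone_from_incenter (K : Set (EuclideanSpace ℝ (Fin 2)))
    (hK : Convex ℝ K) (c : EuclideanSpace ℝ (Fin 2)) (hc : c ∈ K)
    (hmax : ∀ x ∈ K, Metric.infDist x Kᶜ ≤ Metric.infDist c Kᶜ)
    (y : EuclideanSpace ℝ (Fin 2)) (hy : y ∈ K) :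
    AntitoneOn (fun t : ℝ => Metric.infDist (c + t • (y - c)) Kᶜ)
      (Set.Icc (0:ℝ) 1) := by
  intro s hs t ht hst
  show infDist (c + t • (y - c)) Kᶜ ≤ infDist (c + s • (y - c)) Kᶜ
  obtain ⟨hs0, hs1⟩ := hs
  obtain ⟨ht0, ht1⟩ := ht
  rcases eq_or_lt_of_le ht0 with ht0' | htpos
  · have : s = 0 := le_antisymm (hst.trans ht0'.symm.le) hs0
    rw [this, ← ht0']
  · -- point at t is in K
    have hmem : ∀ u : ℝ, 0 ≤ u → u ≤ 1 → c + u • (y - c) ∈ K := by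
      intro u hu hu1
      have := hK hc hy (by linarith : (0:ℝ) ≤ 1 - u) hu (by ring)
      convert this using 1
      module
    have hxt : c + t • (y - c) ∈ K := hmem t ht0 ht1
    set lam := s / t with hlam
    have hlam0 : 0 ≤ lam := div_nonneg hs0 ht0
    have hlam1 : lam ≤ 1 := (div_le_one htpos).mpr hst
    have hcomb : c + s • (y - c) = (1 - lam) • c + lam • (c + t • (y - c)) := by
      have : lam * t = s := div_mul_cancel₀ s htpos.ne'
      rw [smul_add, smul_smul, this]
      module
    rw [hcomb]
    calc infDist (c + t • (y - c)) Kᶜ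
        = (1 - lam) * infDist (c + t • (y - c)) Kᶜ + lam * infDist (c + t • (y - c)) Kᶜ := by
          ring
      _ ≤ (1 - lam) * infDist c Kᶜ + lam * infDist (c + t • (y - c)) Kᶜ := by
          have := hmax _ hxt
          nlinarith
      _ ≤ infDist ((1 - lam) • c + lam • (c + t • (y - c))) Kᶜ :=
          concave_step hK hc hxt (by linarith) hlam0 (by ring)
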